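/- For the QIF model with S > 0, α = arctan(x̲/√S), β = arctan(x̄/√S), the iPRC is Z(φ) = (1/(ST)) · cos²(φβ + (1-φ)α), and Z'(φ) + Z'(1-φ) = -(2/√S)·sin(α+β)·cos((2φ-1)(β-α)). -/

import Mathlib

open Set Real

/-- For the QIF model with `S > 0`, `α = arctan (x̲/√S)`, `β = arctan (x̄/√S)`, the iPRC is
`Z φ = (1/(S T)) cos² (φβ + (1-φ)α)` and
`Z' φ + Z' (1-φ) = -(2/√S) sin (α+β) cos ((2φ-1)(β-α))`. -/
theorem qif_iPRC (S xl xu : ℝ) (hS : 0 < S) (hx : xl < xu)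
    (α β : ℝ) (hα : α = Real.arctan (xl / Real.sqrt S)) (hβ : β = Real.arctan (xu / Real.sqrt S))
    (T : ℝ) (hT : T = (β - α) / Real.sqrt S)
    (f Z : ℝ → ℝ)
    (hf : ∀ φ, f φ = Real.sqrt S * Real.tan (φ * β + (1 - φ) * α))
    (hZ : ∀ φ, Z φ = 1 / (T * (S + f φ ^ 2))) :
    ∀ φ ∈ Icc (0:ℝ) 1,
      Z φ = (1 / (S * T)) * Real.cos (φ * β + (1 - φ) * α) ^ 2 ∧
      deriv Z φ + deriv Z (1 - φ) =
        -(2 / Real.sqrt S) * Real.sin (α + β) * Real.cos ((2 * φ - 1) * (β - α)) := by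
  have hS' : (0:ℝ) < Real.sqrt S := Real.sqrt_pos.2 hS
  have hsq : Real.sqrt S ^ 2 = S := Real.sq_sqrt hS.le
  have hαβ : α < β := by
    rw [hα, hβ]
    exact Real.arctan_strictMono (by gcongr)
  have hba : (0:ℝ) < β - α := sub_pos.2 hαβ
  have hα2 : -(π/2) < α := by rw [hα]; exact Real.neg_pi_div_two_lt_arctan _
  have hβ2 : β < π/2 := by rw [hβ]; exact Real.arctan_lt_pi_div_two _
  have hT0 : (0:ℝ) < T := by rw [hT]; positivity
  have hST : S * T = Real.sqrt S * (β - α) := by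
    rw [hT]
    field_simp
    nlinarith [hsq]
  set θ : ℝ → ℝ := fun φ => φ * β + (1 - φ) * α with hθdef
  set lo : ℝ := (-(π/2) - α) / (β - α) with hlo
  set hi : ℝ := (π/2 - α) / (β - α) with hhi
  have hmemθ : ∀ x ∈ Ioo lo hi, θ x ∈ Ioo (-(π/2)) (π/2) := by
    rintro x ⟨h1, h2⟩
    rw [hlo, div_lt_iff₀ hba] at h1
    rw [hhi, lt_div_iff₀ hba] at h2
    constructor <;> [skip; skip] <;> simp only [hθdef] <;> nlinarith
  have hsub : Icc (0:ℝ) 1 ⊆ Ioo lo hi := by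
    intro x hx'
    obtain ⟨h1, h2⟩ := hx'
    constructor
    · rw [hlo, div_lt_iff₀ hba]; nlinarith
    · rw [hhi, lt_div_iff₀ hba]; nlinarith
  have hcos : ∀ x ∈ Ioo lo hi, 0 < Real.cos (θ x) := fun x hx' =>
    Real.cos_pos_of_mem_Ioo (by simpa using hmemθ x hx')
  have hZg : ∀ x ∈ Ioo lo hi, Z x = (1 / (S * T)) * Real.cos (θ x) ^ 2 := by
    intro x hx'
    have hc := (hcos x hx').ne'
    have hpy := Real.sin_sq_add_cos_sq (θ x)
    rw [hZ, hf, Real.tan_eq_sin_div_cos]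
    show (1:ℝ) / (T * (S + (Real.sqrt S * (Real.sin (θ x) / Real.cos (θ x))) ^ 2)) = _
    field_simp
    linear_combination (-S) * hpy - Real.sin (θ x)^2 * hsq
  have hg : ∀ x : ℝ, HasDerivAt (fun y => (1 / (S * T)) * Real.cos (θ y) ^ 2)
      (-(1 / Real.sqrt S) * Real.sin (2 * θ x)) x := by
    intro x
    have hθ' : HasDerivAt θ (β - α) x := by
      have h : θ = fun y : ℝ => y * (β - α) + α := by funext y; simp [hθdef]; ring
      rw [h]
      simpa using ((hasDerivAt_id x).mul_const (β - α)).add_const α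
    have hc : HasDerivAt (fun y => Real.cos (θ y)) (-Real.sin (θ x) * (β - α)) x :=
      (Real.hasDerivAt_cos (θ x)).comp x hθ'
    have h2 := (hc.pow 2).const_mul (1 / (S * T))
    refine h2.congr_deriv ?_
    have hS0 : Real.sqrt S ≠ 0 := hS'.ne'
    have hST0 : S * T ≠ 0 := by positivity
    rw [Real.sin_two_mul]
    field_simp [hST]
    linear_combination (2 * Real.cos (θ x) * Real.sin (θ x)) * hST
  have hderivZ : ∀ x ∈ Ioo lo hi, deriv Z x = -(1 / Real.sqrt S) * Real.sin (2 * θ x) := by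
    intro x hx'
    have hev : Z =ᶠ[nhds x] fun y => (1 / (S * T)) * Real.cos (θ y) ^ 2 :=
      Filter.eventuallyEq_of_mem (isOpen_Ioo.mem_nhds hx') fun y hy => hZg y hy
    rw [hev.deriv_eq, (hg x).deriv]
  intro φ hφ
  have hφ' : φ ∈ Ioo lo hi := hsub hφ
  have hφ1 : (1 - φ) ∈ Ioo lo hi := hsub ⟨by linarith [hφ.2], by linarith [hφ.1]⟩
  refine ⟨hZg φ hφ', ?_⟩
  rw [hderivZ φ hφ', hderivZ (1 - φ) hφ1]
  have hs : Real.sin (2 * θ φ) + Real.sin (2 * θ (1 - φ)) =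
      2 * Real.sin ((2 * θ φ + 2 * θ (1 - φ)) / 2) * Real.cos ((2 * θ φ - 2 * θ (1 - φ)) / 2) := by
    have h := Real.sin_sub_sin (2 * θ φ) (-(2 * θ (1 - φ)))
    rw [Real.sin_neg, sub_neg_eq_add, sub_neg_eq_add, ← sub_eq_add_neg] at h
    linarith [h]
  have h1 : (2 * θ φ + 2 * θ (1 - φ)) / 2 = α + β := by simp only [hθdef]; ring
  have h2 : (2 * θ φ - 2 * θ (1 - φ)) / 2 = (2 * φ - 1) * (β - α) := by
    simp only [hθdef]; ring
  rw [h1, h2] at hs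
  linear_combination (-(1 / Real.sqrt S)) * hs
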